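/- If X is monotonically Sokolov then C_p(X) (the space of continuous real-valued functions on X with the pointwise convergence topology) is monotonically retractable, and if X is monotonically retractable then C_p(X) is monotonically Sokolov; consequently, if X is monotonically retractable then X has countable tightness. -/

import Mathlib

/-- An assignment of families of sets to sets is ω-monotone: countable values on
countable arguments, monotone, and commuting with countable increasing unions. -/
def OmegaMonotone {X Y : Type*} (N : Set X → Set Y) : Prop :=
  (∀ A : Set X, A.Countable → (N A).Countable) ∧
  (∀ A B : Set X, A.Countable → B.Countable → A ⊆ B → N A ⊆ N B) ∧
  (∀ u : ℕ → Set X, (∀ n, (u n).Countable) → (∀ n, u n ⊆ u (n + 1)) →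
    N (⋃ n, u n) = ⋃ n, N (u n))

/-- A space is monotonically retractable if to every countable set `A` one can
assign a continuous retraction `r A` with `A ⊆ r A [X]` and an ω-monotone
assignment of countable networks of `r A`. -/
def MonotonicallyRetractable (X : Type*) [TopologicalSpace X] : Prop :=
  ∃ (r : Set X → X → X) (N : Set X → Set (Set X)),
    OmegaMonotone N ∧
    ∀ A : Set X, A.Countable →
      Continuous (r A) ∧ r A ∘ r A = r A ∧ A ⊆ Set.range (r A) ∧
      (∀ U : Set X, IsOpen U → ∃ M ⊆ N A, (r A) ⁻¹' U = ⋃₀ M)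

/-- A space is monotonically Sokolov if to every countable family `F` of closed
sets one can assign a continuous retraction `r F` with `r F '' A ⊆ A` for
`A ∈ F` and an ω-monotone assignment of countable external networks of
`r F [X]` in `X`. -/
def MonotonicallySokolov (X : Type*) [TopologicalSpace X] : Prop :=
  ∃ (r : Set (Set X) → X → X) (N : Set (Set X) → Set (Set X)),
    OmegaMonotone N ∧
    ∀ F : Set (Set X), F.Countable → (∀ A ∈ F, IsClosed A) →
      Continuous (r F) ∧ r F ∘ r F = r F ∧
      (∀ A ∈ F, r F '' A ⊆ A) ∧
      (∀ x ∈ Set.range (r F), ∀ U : Set X, IsOpen U → x ∈ U →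
        ∃ M ∈ N F, x ∈ M ∧ M ⊆ U)

/-- A space has countable tightness. -/
def CountableTightness (X : Type*) [TopologicalSpace X] : Prop :=
  ∀ (A : Set X) (a : X), a ∈ closure A → ∃ S ⊆ A, S.Countable ∧ a ∈ closure S

open Set Topology

namespace MRSDual


lemma countable_lists {α : Type*} {s : Set α} (hs : s.Countable) :
    {l : List α | ∀ e ∈ l, e ∈ s}.Countable := by
  have : Countable ↥s := hs.to_subtype
  have hsub : {l : List α | ∀ e ∈ l, e ∈ s} ⊆ Set.range (fun L : List ↥s => L.map Subtype.val) := by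
    intro l hl
    refine ⟨l.attach.map (fun e => ⟨e.1, hl e.1 e.2⟩), ?_⟩
    simp [List.map_map]
  exact (Set.countable_range _).mono hsub

lemma rat_refine {o : Set ℝ} (ho : IsOpen o) {y : ℝ} (hy : y ∈ o) :
    ∃ p q : ℚ, y ∈ Ioo (p : ℝ) (q : ℝ) ∧ Ioo (p : ℝ) (q : ℝ) ⊆ o := by
  obtain ⟨ε, hε, hball⟩ := Metric.isOpen_iff.1 ho y hy
  obtain ⟨p, hp1, hp2⟩ := exists_rat_btwn (by linarith : y - ε < y)
  obtain ⟨q, hq1, hq2⟩ := exists_rat_btwn (by linarith : y < y + ε)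
  refine ⟨p, q, ⟨hp2, hq1⟩, ?_⟩
  intro z hz
  apply hball
  rw [Real.ball_eq_Ioo]
  exact ⟨by linarith [hz.1], by linarith [hz.2]⟩

variable {X : Type*} [TopologicalSpace X]

lemma basic_nbhd {U : Set {f : X → ℝ // Continuous f}} (hU : IsOpen U)
    {h : {f : X → ℝ // Continuous f}} (hh : h ∈ U) :
    ∃ (s : Finset X) (P Q : X → ℚ),
      (∀ x ∈ s, h.1 x ∈ Ioo (P x : ℝ) (Q x : ℝ)) ∧
      {k : {f : X → ℝ // Continuous f} | ∀ x ∈ s, k.1 x ∈ Ioo (P x : ℝ) (Q x : ℝ)} ⊆ U := by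
  obtain ⟨V, hV, hVU⟩ := isOpen_induced_iff.1 hU
  have hh' : h.1 ∈ V := by
    have := hh; rw [← hVU] at this; exact this
  obtain ⟨I, u, hu, hIV⟩ := isOpen_pi_iff.1 hV h.1 hh'
  have hchoice : ∀ x : X, ∃ p q : ℚ, x ∈ I → (h.1 x ∈ Ioo (p:ℝ) q ∧ Ioo (p:ℝ) (q:ℝ) ⊆ u x) := by
    intro x
    by_cases hx : x ∈ I
    · obtain ⟨p, q, h1, h2⟩ := rat_refine (hu x hx).1 (hu x hx).2
      exact ⟨p, q, fun _ => ⟨h1, h2⟩⟩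
    · exact ⟨0, 0, fun hx' => absurd hx' hx⟩
  choose P Q hPQ using hchoice
  refine ⟨I, P, Q, fun x hx => (hPQ x hx).1, ?_⟩
  intro k hk
  rw [← hVU]
  apply hIV
  intro x hx
  exact (hPQ x hx).2 (hk x hx)

lemma fix_of_range {Y : Type*} {ρ : Y → Y} (hid : ρ ∘ ρ = ρ) {y : Y} (hy : y ∈ Set.range ρ) :
    ρ y = y := by
  obtain ⟨z, rfl⟩ := hy
  exact congrFun hid z

def Wset (N : Set X) (p q : ℚ) : Set {f : X → ℝ // Continuous f} :=
  {g | ∀ y ∈ N, g.1 y ∈ Ioo (p : ℝ) (q : ℝ)}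

def WS (S : Set (Set X)) : Set (Set {f : X → ℝ // Continuous f}) :=
  {T | ∃ l : List (Set X × ℚ × ℚ), (∀ e ∈ l, e.1 ∈ S) ∧
    T = {g | ∀ e ∈ l, g ∈ Wset e.1 e.2.1 e.2.2}}

lemma ws_mono {S S' : Set (Set X)} (h : S ⊆ S') : WS S ⊆ WS S' := by
  rintro T ⟨l, hl, rfl⟩
  exact ⟨l, fun e he => h (hl e he), rfl⟩

lemma ws_countable {S : Set (Set X)} (hS : S.Countable) : (WS S).Countable := by
  have h1 : {l : List (Set X × ℚ × ℚ) | ∀ e ∈ l, e ∈ S ×ˢ (univ : Set (ℚ × ℚ))}.Countable :=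
    countable_lists (hS.prod countable_univ)
  have h2 : WS S ⊆ (fun l : List (Set X × ℚ × ℚ) =>
      {g : {f : X → ℝ // Continuous f} | ∀ e ∈ l, g ∈ Wset e.1 e.2.1 e.2.2}) ''
      {l | ∀ e ∈ l, e ∈ S ×ˢ (univ : Set (ℚ × ℚ))} := by
    rintro T ⟨l, hl, rfl⟩
    exact ⟨l, fun e he => ⟨hl e he, mem_univ _⟩, rfl⟩
  exact (h1.image _).mono h2

lemma list_bound {S : ℕ → Set (Set X)} (hmono : ∀ n, S n ⊆ S (n+1))
    (l : List (Set X × ℚ × ℚ)) (hl : ∀ e ∈ l, e.1 ∈ ⋃ n, S n) :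
    ∃ n, ∀ e ∈ l, e.1 ∈ S n := by
  have hm : Monotone S := monotone_nat_of_le_succ hmono
  induction l with
  | nil => exact ⟨0, by simp⟩
  | cons a l ih =>
    obtain ⟨n₁, hn₁⟩ := mem_iUnion.1 (hl a List.mem_cons_self)
    obtain ⟨n₂, hn₂⟩ := ih (fun e he => hl e (List.mem_cons_of_mem a he))
    refine ⟨max n₁ n₂, ?_⟩
    intro e he
    rcases List.mem_cons.1 he with rfl | he'
    · exact hm (le_max_left n₁ n₂) hn₁
    · exact hm (le_max_right n₁ n₂) (hn₂ e he')

lemma ws_iUnion {S : ℕ → Set (Set X)} (hmono : ∀ n, S n ⊆ S (n+1)) :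
    WS (⋃ n, S n) = ⋃ n, WS (S n) := by
  apply Subset.antisymm
  · rintro T ⟨l, hl, rfl⟩
    obtain ⟨n, hn⟩ := list_bound hmono l hl
    exact mem_iUnion.2 ⟨n, l, hn, rfl⟩
  · exact iUnion_subset fun n => ws_mono (subset_iUnion S n)

open Classical in
/-- the composition retraction on Cp -/
noncomputable def compR (ρ : X → X) (g : {f : X → ℝ // Continuous f}) :
    {f : X → ℝ // Continuous f} :=
  if h : Continuous ρ then ⟨g.1 ∘ ρ, g.2.comp h⟩ else g

/-- the family of closed sets associated to a countable set of functions -/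
def Fam (A : Set {f : X → ℝ // Continuous f}) : Set (Set X) :=
  {S | ∃ f ∈ A, ∃ p : ℚ, S = f.1 ⁻¹' (Iic (p:ℝ)) ∨ S = f.1 ⁻¹' (Ici (p:ℝ))}

lemma fam_countable {A : Set {f : X → ℝ // Continuous f}} (hA : A.Countable) :
    (Fam A).Countable := by
  have h : Fam A ⊆ (fun t : ({f : X → ℝ // Continuous f} × ℚ × Bool) =>
      if t.2.2 then t.1.1 ⁻¹' (Iic (t.2.1:ℝ)) else t.1.1 ⁻¹' (Ici (t.2.1:ℝ))) ''
      (A ×ˢ (univ : Set (ℚ × Bool))) := by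
    rintro S ⟨f, hf, p, h | h⟩
    · exact ⟨(f, p, true), ⟨hf, mem_univ _⟩, by simp [h]⟩
    · exact ⟨(f, p, false), ⟨hf, mem_univ _⟩, by simp [h]⟩
  exact ((hA.prod countable_univ).image _).mono h

lemma fam_mono {A B : Set {f : X → ℝ // Continuous f}} (h : A ⊆ B) : Fam A ⊆ Fam B := by
  rintro S ⟨f, hf, p, hp⟩
  exact ⟨f, h hf, p, hp⟩

lemma fam_iUnion (u : ℕ → Set {f : X → ℝ // Continuous f}) :
    Fam (⋃ n, u n) = ⋃ n, Fam (u n) := by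
  ext S
  constructor
  · rintro ⟨f, hf, p, hp⟩
    obtain ⟨n, hn⟩ := mem_iUnion.1 hf
    exact mem_iUnion.2 ⟨n, f, hn, p, hp⟩
  · rintro hS
    obtain ⟨n, f, hf, p, hp⟩ := mem_iUnion.1 hS
    exact ⟨f, mem_iUnion.2 ⟨n, hf⟩, p, hp⟩

lemma fam_closed (A : Set {f : X → ℝ // Continuous f}) : ∀ S ∈ Fam A, IsClosed S := by
  rintro S ⟨f, _, p, rfl | rfl⟩
  · exact isClosed_Iic.preimage f.2
  · exact isClosed_Ici.preimage f.2

lemma part1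
    (hMS : ∃ (r : Set (Set X) → X → X) (N : Set (Set X) → Set (Set X)),
      ((∀ A : Set (Set X), A.Countable → (N A).Countable) ∧
       (∀ A B : Set (Set X), A.Countable → B.Countable → A ⊆ B → N A ⊆ N B) ∧
       (∀ u : ℕ → Set (Set X), (∀ n, (u n).Countable) → (∀ n, u n ⊆ u (n + 1)) →
         N (⋃ n, u n) = ⋃ n, N (u n))) ∧
      ∀ F : Set (Set X), F.Countable → (∀ A ∈ F, IsClosed A) →
        Continuous (r F) ∧ r F ∘ r F = r F ∧
        (∀ A ∈ F, r F '' A ⊆ A) ∧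
        (∀ x ∈ Set.range (r F), ∀ U : Set X, IsOpen U → x ∈ U →
          ∃ M ∈ N F, x ∈ M ∧ M ⊆ U)) :
    ∃ (R : Set {f : X → ℝ // Continuous f} → {f : X → ℝ // Continuous f} → {f : X → ℝ // Continuous f})
      (N' : Set {f : X → ℝ // Continuous f} → Set (Set {f : X → ℝ // Continuous f})),
      ((∀ A, A.Countable → (N' A).Countable) ∧
       (∀ A B, A.Countable → B.Countable → A ⊆ B → N' A ⊆ N' B) ∧
       (∀ u : ℕ → Set {f : X → ℝ // Continuous f}, (∀ n, (u n).Countable) →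
         (∀ n, u n ⊆ u (n + 1)) → N' (⋃ n, u n) = ⋃ n, N' (u n))) ∧
      ∀ A, A.Countable →
        Continuous (R A) ∧ R A ∘ R A = R A ∧ A ⊆ Set.range (R A) ∧
        (∀ U, IsOpen U → ∃ M ⊆ N' A, (R A) ⁻¹' U = ⋃₀ M) := by
  classical
  obtain ⟨r, N, ⟨hc, hm, hu⟩, hSok⟩ := hMS
  refine ⟨fun A => compR (r (Fam A)), fun A => WS (N (Fam A)), ⟨?_, ?_, ?_⟩, ?_⟩
  · intro A hA
    exact ws_countable (hc _ (fam_countable hA))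
  · intro A B hA hB hAB
    exact ws_mono (hm _ _ (fam_countable hA) (fam_countable hB) (fam_mono hAB))
  · intro u huc humono
    show WS (N (Fam (⋃ n, u n))) = ⋃ n, WS (N (Fam (u n)))
    rw [fam_iUnion, hu (fun n => Fam (u n)) (fun n => fam_countable (huc n))
      (fun n => fam_mono (humono n))]
    exact ws_iUnion (fun n => hm _ _ (fam_countable (huc n)) (fam_countable (huc (n+1)))
      (fam_mono (humono n)))
  · intro A hA
    beta_reduce
    obtain ⟨hcont, hidem, hinv, hext⟩ := hSok (Fam A) (fam_countable hA) (fam_closed A)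
    set ρ := r (Fam A) with hρ
    have hR : compR ρ = fun g : {f : X → ℝ // Continuous f} => (⟨g.1 ∘ ρ, g.2.comp hcont⟩ :
        {f : X → ℝ // Continuous f}) := by
      funext g; simp [compR, dif_pos hcont]
    constructor
    · -- continuity
      rw [hR]
      have hcv : Continuous fun g : {f : X → ℝ // Continuous f} => (g.1 : X → ℝ) :=
        continuous_subtype_val
      have h1 : Continuous fun g : {f : X → ℝ // Continuous f} => (g.1 ∘ ρ : X → ℝ) :=
        continuous_pi fun x => (continuous_apply (ρ x)).comp hcv
      exact h1.subtype_mk _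
    constructor
    · -- idempotent
      funext g
      rw [hR]
      apply Subtype.ext
      show (g.1 ∘ ρ) ∘ ρ = g.1 ∘ ρ
      calc (g.1 ∘ ρ) ∘ ρ = g.1 ∘ (ρ ∘ ρ) := rfl
        _ = g.1 ∘ ρ := by rw [hidem]
    constructor
    · -- A ⊆ range
      intro f hf
      have hfix : compR ρ f = f := by
        rw [hR]
        apply Subtype.ext
        funext x
        show f.1 (ρ x) = f.1 x
        by_contra hne
        rcases lt_or_gt_of_ne hne with hlt | hgt
        · obtain ⟨p, hp1, hp2⟩ := exists_rat_btwn hlt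
          have hS : f.1 ⁻¹' (Ici (p:ℝ)) ∈ Fam A := ⟨f, hf, p, Or.inr rfl⟩
          have hxS : x ∈ f.1 ⁻¹' (Ici (p:ℝ)) := le_of_lt hp2
          have := hinv _ hS ⟨x, hxS, rfl⟩
          exact absurd (lt_of_lt_of_le hp1 this) (lt_irrefl _)
        · obtain ⟨p, hp1, hp2⟩ := exists_rat_btwn hgt
          have hS : f.1 ⁻¹' (Iic (p:ℝ)) ∈ Fam A := ⟨f, hf, p, Or.inl rfl⟩
          have hxS : x ∈ f.1 ⁻¹' (Iic (p:ℝ)) := le_of_lt hp1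
          have := hinv _ hS ⟨x, hxS, rfl⟩
          exact absurd (lt_of_le_of_lt this hp2) (lt_irrefl _)
      exact ⟨f, hfix⟩
    · -- network
      intro U hU
      refine ⟨{T ∈ WS (N (Fam A)) | T ⊆ (compR ρ) ⁻¹' U}, fun T hT => hT.1, ?_⟩
      apply Subset.antisymm
      · intro g hg
        obtain ⟨s, P, Q, hmem, hsub⟩ := basic_nbhd hU hg
        have hgx : ∀ x ∈ s, g.1 (ρ x) ∈ Ioo (P x : ℝ) (Q x : ℝ) := by
          intro x hx
          have := hmem x hx
          rw [hR] at this
          exact this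
        have hchoice : ∀ x : X, ∃ M : Set X, x ∈ s →
            (M ∈ N (Fam A) ∧ ρ x ∈ M ∧ M ⊆ g.1 ⁻¹' (Ioo (P x : ℝ) (Q x : ℝ))) := by
          intro x
          by_cases hx : x ∈ s
          · obtain ⟨M, hM1, hM2, hM3⟩ := hext (ρ x) ⟨x, rfl⟩ _
              (isOpen_Ioo.preimage g.2) (hgx x hx)
            exact ⟨M, fun _ => ⟨hM1, hM2, hM3⟩⟩
          · exact ⟨∅, fun hx' => absurd hx' hx⟩
        choose nx hnx using hchoice
        set l : List (Set X × ℚ × ℚ) := s.toList.map (fun x => (nx x, P x, Q x)) with hl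
        set T : Set {f : X → ℝ // Continuous f} :=
          {k | ∀ e ∈ l, k ∈ Wset e.1 e.2.1 e.2.2} with hT
        have hlmem : ∀ e ∈ l, ∃ x ∈ s, e = (nx x, P x, Q x) := by
          intro e he
          obtain ⟨x, hx, rfl⟩ := List.mem_map.1 he
          exact ⟨x, Finset.mem_toList.1 hx, rfl⟩
        have hTws : T ∈ WS (N (Fam A)) := by
          refine ⟨l, ?_, rfl⟩
          intro e he
          obtain ⟨x, hx, rfl⟩ := hlmem e he
          exact (hnx x hx).1
        have hTsub : T ⊆ (compR ρ) ⁻¹' U := by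
          intro k hk
          have : compR ρ k ∈ {k' : {f : X → ℝ // Continuous f} |
              ∀ x ∈ s, k'.1 x ∈ Ioo (P x : ℝ) (Q x : ℝ)} := by
            intro x hx
            have hpair : (nx x, P x, Q x) ∈ l :=
              List.mem_map.2 ⟨x, Finset.mem_toList.2 hx, rfl⟩
            have := hk _ hpair (ρ x) ((hnx x hx).2.1)
            rw [hR]
            exact this
          exact hsub this
        have hgT : g ∈ T := by
          intro e he
          obtain ⟨x, hx, rfl⟩ := hlmem e he
          intro y hy
          exact (hnx x hx).2.2 hy
        exact ⟨T, ⟨hTws, hTsub⟩, hgT⟩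
      · rintro g ⟨T, ⟨_, hTsub⟩, hgT⟩
        exact hTsub hgT

/-! ### Part 2: monotone retractability of X implies Cp(X) monotonically Sokolov -/

lemma zip_map_self {α β : Type*} (L : List α) (g : α → β) :
    L.zip (L.map g) = L.map (fun a => (a, g a)) := by
  induction L with
  | nil => rfl
  | cons a L ih => simp [ih]

variable (X) in
def BadSet (τ : Set {f : X → ℝ // Continuous f} × List (Set X × ℚ × ℚ)) : Set (List X) :=
  {c | c.length = τ.2.length ∧ (∀ e ∈ c.zip τ.2, e.1 ∈ e.2.1) ∧
    ∀ f ∈ τ.1, ∃ e ∈ c.zip τ.2, f.1 e.1 ∉ Ioo ((e.2.2.1 : ℝ)) ((e.2.2.2 : ℝ))}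

open Classical in
variable (X) in
noncomputable def badpts (τ : Set {f : X → ℝ // Continuous f} × List (Set X × ℚ × ℚ)) :
    Set X :=
  if h : (BadSet X τ).Nonempty then {x | x ∈ h.choose} else ∅

lemma badpts_countable (τ : Set {f : X → ℝ // Continuous f} × List (Set X × ℚ × ℚ)) :
    (badpts X τ).Countable := by
  unfold badpts
  split
  · exact (List.finite_toSet _).countable
  · exact countable_empty

lemma badpts_spec {τ : Set {f : X → ℝ // Continuous f} × List (Set X × ℚ × ℚ)}
    (h : (BadSet X τ).Nonempty) :
    ∃ c ∈ BadSet X τ, badpts X τ = {x | x ∈ c} :=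
  ⟨h.choose, h.choose_spec, dif_pos h⟩

variable (X) in
def Tuples (N : Set X → Set (Set X)) (F : Set (Set {f : X → ℝ // Continuous f}))
    (A0 : Set X) : Set (Set {f : X → ℝ // Continuous f} × List (Set X × ℚ × ℚ)) :=
  {τ | τ.1 ∈ F ∧ ∀ e ∈ τ.2, e.1 ∈ N A0}

lemma tuples_countable {N : Set X → Set (Set X)}
    (hc : ∀ A : Set X, A.Countable → (N A).Countable)
    {F : Set (Set {f : X → ℝ // Continuous f})} (hF : F.Countable)
    {A0 : Set X} (hA0 : A0.Countable) : (Tuples X N F A0).Countable := by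
  have hL : {l : List (Set X × ℚ × ℚ) | ∀ e ∈ l, e ∈ (N A0) ×ˢ (univ : Set (ℚ × ℚ))}.Countable :=
    countable_lists ((hc A0 hA0).prod countable_univ)
  refine (hF.prod hL).mono ?_
  rintro ⟨F₀, l⟩ ⟨h1, h2⟩
  exact ⟨h1, fun e he => ⟨h2 e he, mem_univ _⟩⟩

variable (X) in
noncomputable def AFn (N : Set X → Set (Set X))
    (F : Set (Set {f : X → ℝ // Continuous f})) : ℕ → Set X
  | 0 => ∅
  | n+1 => AFn N F n ∪ ⋃ τ ∈ Tuples X N F (AFn N F n), badpts X τ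

variable (X) in
noncomputable def AF (N : Set X → Set (Set X))
    (F : Set (Set {f : X → ℝ // Continuous f})) : Set X := ⋃ n, AFn X N F n

section AFlemmas
variable {N : Set X → Set (Set X)}
  (hc : ∀ A : Set X, A.Countable → (N A).Countable)
  (hm : ∀ A B : Set X, A.Countable → B.Countable → A ⊆ B → N A ⊆ N B)
  (hu : ∀ u : ℕ → Set X, (∀ n, (u n).Countable) → (∀ n, u n ⊆ u (n + 1)) →
    N (⋃ n, u n) = ⋃ n, N (u n))

include hc in
lemma afn_countable {F : Set (Set {f : X → ℝ // Continuous f})} (hF : F.Countable) :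
    ∀ n, (AFn X N F n).Countable := by
  intro n
  induction n with
  | zero => exact countable_empty
  | succ n ih =>
    exact ih.union ((tuples_countable hc hF ih).biUnion fun τ _ => badpts_countable τ)

lemma afn_le_succ (F : Set (Set {f : X → ℝ // Continuous f})) (n : ℕ) :
    AFn X N F n ⊆ AFn X N F (n+1) := subset_union_left

include hc hm in
lemma afn_mono_F {F F' : Set (Set {f : X → ℝ // Continuous f})}
    (hF : F.Countable) (hF' : F'.Countable) (hFF' : F ⊆ F') :
    ∀ n, AFn X N F n ⊆ AFn X N F' n := by
  intro n
  induction n with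
  | zero => exact Subset.rfl
  | succ n ih =>
    apply union_subset_union ih
    have hT : Tuples X N F (AFn X N F n) ⊆ Tuples X N F' (AFn X N F' n) := by
      rintro τ ⟨h1, h2⟩
      exact ⟨hFF' h1, fun e he =>
        hm _ _ (afn_countable hc hF n) (afn_countable hc hF' n) ih (h2 e he)⟩
    exact biUnion_subset_biUnion_left hT

include hc hm hu in
lemma afn_iUnion (u : ℕ → Set (Set {f : X → ℝ // Continuous f}))
    (huc : ∀ m, (u m).Countable) (humono : ∀ m, u m ⊆ u (m+1)) :
    ∀ n, AFn X N (⋃ m, u m) n = ⋃ m, AFn X N (u m) n := by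
  have hUc : (⋃ m, u m).Countable := countable_iUnion huc
  intro n
  induction n with
  | zero => simp [AFn]
  | succ n ih =>
    have hBc : ∀ m, (AFn X N (u m) n).Countable := fun m => afn_countable hc (huc m) n
    have hBmono : ∀ m, AFn X N (u m) n ⊆ AFn X N (u (m+1)) n :=
      fun m => afn_mono_F hc hm (huc m) (huc (m+1)) (humono m) n
    have hNeq : N (AFn X N (⋃ m, u m) n) = ⋃ m, N (AFn X N (u m) n) := by
      rw [ih]; exact hu _ hBc hBmono
    have hTeq : Tuples X N (⋃ m, u m) (AFn X N (⋃ m, u m) n)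
        = ⋃ m, Tuples X N (u m) (AFn X N (u m) n) := by
      apply Subset.antisymm
      · rintro τ ⟨h1, h2⟩
        obtain ⟨m₁, hm₁⟩ := mem_iUnion.1 h1
        rw [hNeq] at h2
        obtain ⟨m₂, hm₂⟩ := list_bound
          (fun m => hm _ _ (hBc m) (hBc (m+1)) (hBmono m)) τ.2 h2
        have hmono1 : Monotone u := monotone_nat_of_le_succ humono
        have hmono2 : Monotone (fun m => AFn X N (u m) n) :=
          monotone_nat_of_le_succ hBmono
        refine mem_iUnion.2 ⟨max m₁ m₂, hmono1 (le_max_left _ _) hm₁, fun e he => ?_⟩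
        exact hm _ _ (hBc m₂) (hBc (max m₁ m₂)) (hmono2 (le_max_right _ _)) (hm₂ e he)
      · refine iUnion_subset fun m => ?_
        rintro τ ⟨h1, h2⟩
        refine ⟨mem_iUnion.2 ⟨m, h1⟩, fun e he => ?_⟩
        rw [hNeq]
        exact mem_iUnion.2 ⟨m, h2 e he⟩
    show AFn X N (⋃ m, u m) n ∪ ⋃ τ ∈ Tuples X N (⋃ m, u m) (AFn X N (⋃ m, u m) n), badpts X τ
        = ⋃ m, (AFn X N (u m) n ∪ ⋃ τ ∈ Tuples X N (u m) (AFn X N (u m) n), badpts X τ)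
    rw [hTeq, ih, biUnion_iUnion, ← iUnion_union_distrib]

include hc in
lemma af_countable {F : Set (Set {f : X → ℝ // Continuous f})} (hF : F.Countable) :
    (AF X N F).Countable := countable_iUnion (afn_countable hc hF)

include hc hm in
lemma af_mono {F F' : Set (Set {f : X → ℝ // Continuous f})}
    (hF : F.Countable) (hF' : F'.Countable) (hFF' : F ⊆ F') : AF X N F ⊆ AF X N F' :=
  iUnion_mono fun n => afn_mono_F hc hm hF hF' hFF' n

include hc hm hu in
lemma af_iUnion (u : ℕ → Set (Set {f : X → ℝ // Continuous f}))
    (huc : ∀ m, (u m).Countable) (humono : ∀ m, u m ⊆ u (m+1)) :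
    AF X N (⋃ m, u m) = ⋃ m, AF X N (u m) := by
  unfold AF
  rw [iUnion_comm]
  exact iUnion_congr fun n => afn_iUnion hc hm hu u huc humono n

include hu in
lemma af_network {F : Set (Set {f : X → ℝ // Continuous f})}
    (hcnt : ∀ n, (AFn X N F n).Countable) :
    N (AF X N F) = ⋃ n, N (AFn X N F n) :=
  hu _ hcnt (afn_le_succ F)

end AFlemmas

lemma part2
    (hMR : ∃ (r : Set X → X → X) (N : Set X → Set (Set X)),
      ((∀ A : Set X, A.Countable → (N A).Countable) ∧
       (∀ A B : Set X, A.Countable → B.Countable → A ⊆ B → N A ⊆ N B) ∧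
       (∀ u : ℕ → Set X, (∀ n, (u n).Countable) → (∀ n, u n ⊆ u (n + 1)) →
         N (⋃ n, u n) = ⋃ n, N (u n))) ∧
      ∀ A : Set X, A.Countable →
        Continuous (r A) ∧ r A ∘ r A = r A ∧ A ⊆ Set.range (r A) ∧
        (∀ U : Set X, IsOpen U → ∃ M ⊆ N A, (r A) ⁻¹' U = ⋃₀ M)) :
    ∃ (R : Set (Set {f : X → ℝ // Continuous f}) → {f : X → ℝ // Continuous f} →
        {f : X → ℝ // Continuous f})
      (NS : Set (Set {f : X → ℝ // Continuous f}) → Set (Set {f : X → ℝ // Continuous f})),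
      ((∀ F, F.Countable → (NS F).Countable) ∧
       (∀ F F', F.Countable → F'.Countable → F ⊆ F' → NS F ⊆ NS F') ∧
       (∀ u : ℕ → Set (Set {f : X → ℝ // Continuous f}), (∀ n, (u n).Countable) →
         (∀ n, u n ⊆ u (n + 1)) → NS (⋃ n, u n) = ⋃ n, NS (u n))) ∧
      ∀ F, F.Countable → (∀ A ∈ F, IsClosed A) →
        Continuous (R F) ∧ R F ∘ R F = R F ∧
        (∀ A ∈ F, R F '' A ⊆ A) ∧
        (∀ x ∈ Set.range (R F), ∀ U, IsOpen U → x ∈ U →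
          ∃ M ∈ NS F, x ∈ M ∧ M ⊆ U) := by
  classical
  obtain ⟨r, N, ⟨hc, hm, hu⟩, hprop⟩ := hMR
  refine ⟨fun F => compR (r (AF X N F)), fun F => WS (N (AF X N F)), ⟨?_, ?_, ?_⟩, ?_⟩
  · intro F hF
    exact ws_countable (hc _ (af_countable hc hF))
  · intro F F' hF hF' hFF'
    exact ws_mono (hm _ _ (af_countable hc hF) (af_countable hc hF')
      (af_mono hc hm hF hF' hFF'))
  · intro u huc humono
    show WS (N (AF X N (⋃ n, u n))) = ⋃ n, WS (N (AF X N (u n)))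
    rw [af_iUnion hc hm hu u huc humono,
      hu _ (fun m => af_countable hc (huc m))
        (fun m => af_mono hc hm (huc m) (huc (m+1)) (humono m))]
    exact ws_iUnion (fun m => hm _ _ (af_countable hc (huc m)) (af_countable hc (huc (m+1)))
      (af_mono hc hm (huc m) (huc (m+1)) (humono m)))
  · intro F hF hclosed
    beta_reduce
    obtain ⟨hcont, hidem, hrange, hnet⟩ := hprop (AF X N F) (af_countable hc hF)
    set ρ := r (AF X N F) with hρ
    have hR : compR ρ = fun g : {f : X → ℝ // Continuous f} => (⟨g.1 ∘ ρ, g.2.comp hcont⟩ :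
        {f : X → ℝ // Continuous f}) := by
      funext g; simp [compR, dif_pos hcont]
    have hfix : ∀ a ∈ AF X N F, ρ a = a := fun a ha => fix_of_range hidem (hrange ha)
    -- the key construction of network elements for a function in the range
    have hkey : ∀ (g : {f : X → ℝ // Continuous f}) (s : Finset X) (P Q : X → ℚ),
        (∀ x ∈ s, g.1 (ρ x) ∈ Ioo (P x : ℝ) (Q x : ℝ)) →
        ∃ nx : X → Set X, ∀ x ∈ s,
          (nx x ∈ N (AF X N F) ∧ x ∈ nx x ∧ nx x ⊆ ρ ⁻¹' (g.1 ⁻¹' (Ioo (P x : ℝ) (Q x : ℝ)))) := by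
      intro g s P Q hgx
      have hchoice : ∀ x : X, ∃ T : Set X, x ∈ s →
          (T ∈ N (AF X N F) ∧ x ∈ T ∧ T ⊆ ρ ⁻¹' (g.1 ⁻¹' (Ioo (P x : ℝ) (Q x : ℝ)))) := by
        intro x
        by_cases hx : x ∈ s
        · obtain ⟨M, hMN, hMeq⟩ := hnet (g.1 ⁻¹' (Ioo (P x : ℝ) (Q x : ℝ)))
            (isOpen_Ioo.preimage g.2)
          have hxmem : x ∈ ρ ⁻¹' (g.1 ⁻¹' (Ioo (P x : ℝ) (Q x : ℝ))) := hgx x hx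
          rw [hMeq] at hxmem
          obtain ⟨T, hTM, hxT⟩ := hxmem
          refine ⟨T, fun _ => ⟨hMN hTM, hxT, ?_⟩⟩
          rw [hMeq]
          exact subset_sUnion_of_mem hTM
        · exact ⟨∅, fun hx' => absurd hx' hx⟩
      choose nx hnx using hchoice
      exact ⟨nx, fun x hx => hnx x hx⟩
    constructor
    · -- continuity
      rw [hR]
      have hcv : Continuous fun g : {f : X → ℝ // Continuous f} => (g.1 : X → ℝ) :=
        continuous_subtype_val
      have h1 : Continuous fun g : {f : X → ℝ // Continuous f} => (g.1 ∘ ρ : X → ℝ) :=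
        continuous_pi fun x => (continuous_apply (ρ x)).comp hcv
      exact h1.subtype_mk _
    constructor
    · -- idempotent
      funext g
      rw [hR]
      apply Subtype.ext
      show (g.1 ∘ ρ) ∘ ρ = g.1 ∘ ρ
      calc (g.1 ∘ ρ) ∘ ρ = g.1 ∘ (ρ ∘ ρ) := rfl
        _ = g.1 ∘ ρ := by rw [hidem]
    constructor
    · -- invariance of members of F
      rintro F₀ hF₀ h ⟨g, hg, rfl⟩
      have hFcl : IsClosed F₀ := hclosed F₀ hF₀
      suffices hcl : compR ρ g ∈ closure F₀ by rwa [hFcl.closure_eq] at hcl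
      rw [mem_closure_iff]
      intro U hU hhU
      obtain ⟨s, P, Q, hmem, hsub⟩ := basic_nbhd hU hhU
      have hgx : ∀ x ∈ s, g.1 (ρ x) ∈ Ioo (P x : ℝ) (Q x : ℝ) := by
        intro x hx
        have := hmem x hx
        rw [hR] at this
        exact this
      obtain ⟨nx, hnx⟩ := hkey g s P Q hgx
      set l : List (Set X × ℚ × ℚ) := s.toList.map (fun x => (nx x, P x, Q x)) with hl
      have hlmem : ∀ e ∈ l, ∃ x ∈ s, e = (nx x, P x, Q x) := by
        intro e he
        obtain ⟨x, hx, rfl⟩ := List.mem_map.1 he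
        exact ⟨x, Finset.mem_toList.1 hx, rfl⟩
      -- common stage for the network elements appearing in l
      have hl2 : ∀ e ∈ l, e.1 ∈ ⋃ n, N (AFn X N F n) := by
        intro e he
        obtain ⟨x, hx, rfl⟩ := hlmem e he
        rw [← af_network hu (afn_countable hc hF)]
        exact (hnx x hx).1
      obtain ⟨n, hn⟩ := list_bound (fun n => hm _ _ (afn_countable hc hF n)
        (afn_countable hc hF (n+1)) (afn_le_succ F n)) l hl2
      have hτ : (F₀, l) ∈ Tuples X N F (AFn X N F n) := ⟨hF₀, hn⟩
      by_cases hbad : (BadSet X (F₀, l)).Nonempty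
      · -- impossible: the chosen bad tuple is defeated by g itself
        exfalso
        obtain ⟨c, hcBad, hceq⟩ := badpts_spec hbad
        have hcsub : ∀ y ∈ c, y ∈ AF X N F := by
          intro y hy
          have h1 : y ∈ badpts X (F₀, l) := by rw [hceq]; exact hy
          have h2 : badpts X (F₀, l) ⊆ AFn X N F (n+1) := by
            intro z hz
            exact Or.inr (mem_biUnion hτ hz)
          exact mem_iUnion.2 ⟨n+1, h2 h1⟩
        obtain ⟨hclen, hczip, hcbad3⟩ := hcBad
        obtain ⟨e, hezip, hge⟩ := hcbad3 g hg
        obtain ⟨hec, hel⟩ := List.of_mem_zip hezip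
        obtain ⟨x, hx, hex⟩ := hlmem e.2 hel
        have hyT : e.1 ∈ (e.2).1 := hczip e hezip
        have h5 : e.1 ∈ nx x := by rw [hex] at hyT; exact hyT
        have h6 : g.1 (ρ e.1) ∈ Ioo (P x : ℝ) (Q x : ℝ) := (hnx x hx).2.2 h5
        have h7 : ρ e.1 = e.1 := hfix e.1 (hcsub e.1 hec)
        rw [h7] at h6
        rw [hex] at hge
        exact hge h6
      · -- BadSet is empty, so our canonical tuple yields a witness in F₀ ∩ U
        have hclen : (s.toList).length = l.length := by
          rw [hl, List.length_map]
        have hczipeq : (s.toList).zip l = s.toList.map (fun x => (x, (nx x, P x, Q x))) := by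
          rw [hl]; exact zip_map_self _ _
        have hczip : ∀ e ∈ (s.toList).zip l, e.1 ∈ (e.2).1 := by
          intro e he
          rw [hczipeq] at he
          obtain ⟨x, hx, rfl⟩ := List.mem_map.1 he
          exact (hnx x (Finset.mem_toList.1 hx)).2.1
        have hnotbad : s.toList ∉ BadSet X (F₀, l) := fun hmem' => hbad ⟨_, hmem'⟩
        have : ¬ (∀ f ∈ F₀, ∃ e ∈ (s.toList).zip l,
            f.1 e.1 ∉ Ioo ((e.2.2.1 : ℝ)) ((e.2.2.2 : ℝ))) := by
          intro h3
          exact hnotbad ⟨hclen, hczip, h3⟩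
        push_neg at this
        obtain ⟨f, hfF₀, hf⟩ := this
        refine ⟨f, hsub ?_, hfF₀⟩
        intro x hx
        have hpair : (x, (nx x, P x, Q x)) ∈ (s.toList).zip l := by
          rw [hczipeq]
          exact List.mem_map.2 ⟨x, Finset.mem_toList.2 hx, rfl⟩
        have := hf _ hpair
        simpa using this
    · -- external network for the range
      rintro h ⟨g, rfl⟩ U hU hhU
      obtain ⟨s, P, Q, hmem, hsub⟩ := basic_nbhd hU hhU
      have hgx : ∀ x ∈ s, g.1 (ρ x) ∈ Ioo (P x : ℝ) (Q x : ℝ) := by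
        intro x hx
        have := hmem x hx
        rw [hR] at this
        exact this
      obtain ⟨nx, hnx⟩ := hkey g s P Q hgx
      set l : List (Set X × ℚ × ℚ) := s.toList.map (fun x => (nx x, P x, Q x)) with hl
      have hlmem : ∀ e ∈ l, ∃ x ∈ s, e = (nx x, P x, Q x) := by
        intro e he
        obtain ⟨x, hx, rfl⟩ := List.mem_map.1 he
        exact ⟨x, Finset.mem_toList.1 hx, rfl⟩
      set T : Set {f : X → ℝ // Continuous f} :=
        {k | ∀ e ∈ l, k ∈ Wset e.1 e.2.1 e.2.2} with hT
      refine ⟨T, ⟨l, ?_, rfl⟩, ?_, ?_⟩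
      · intro e he
        obtain ⟨x, hx, rfl⟩ := hlmem e he
        exact (hnx x hx).1
      · -- compR ρ g ∈ T
        intro e he
        obtain ⟨x, hx, rfl⟩ := hlmem e he
        intro y hy
        have h1 : ρ y ∈ g.1 ⁻¹' (Ioo (P x : ℝ) (Q x : ℝ)) := (hnx x hx).2.2 hy
        rw [hR]
        exact h1
      · -- T ⊆ U
        intro k hk
        apply hsub
        intro x hx
        have hpair : (nx x, P x, Q x) ∈ l :=
          List.mem_map.2 ⟨x, Finset.mem_toList.2 hx, rfl⟩
        exact hk _ hpair x ((hnx x hx).2.1)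

lemma part3
    (hMR : ∃ (r : Set X → X → X) (N : Set X → Set (Set X)),
      ((∀ A : Set X, A.Countable → (N A).Countable) ∧
       (∀ A B : Set X, A.Countable → B.Countable → A ⊆ B → N A ⊆ N B) ∧
       (∀ u : ℕ → Set X, (∀ n, (u n).Countable) → (∀ n, u n ⊆ u (n + 1)) →
         N (⋃ n, u n) = ⋃ n, N (u n))) ∧
      ∀ A : Set X, A.Countable →
        Continuous (r A) ∧ r A ∘ r A = r A ∧ A ⊆ Set.range (r A) ∧
        (∀ U : Set X, IsOpen U → ∃ M ⊆ N A, (r A) ⁻¹' U = ⋃₀ M)) :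
    ∀ (A : Set X) (a : X), a ∈ closure A → ∃ S ⊆ A, S.Countable ∧ a ∈ closure S := by
  obtain ⟨r, N, ⟨hc, hm, hu⟩, hprop⟩ := hMR
  intro A a ha
  classical
  -- pick a point of T ∩ A when possible
  set pick : Set X → X := fun T => if h : (T ∩ A).Nonempty then h.choose else a with hpick
  have hpickA : ∀ T : Set X, (T ∩ A).Nonempty → pick T ∈ T ∩ A := by
    intro T hT
    simp only [hpick, dif_pos hT]
    exact hT.choose_spec
  -- the increasing sequence of countable sets
  set B : ℕ → Set X := fun n => Nat.rec ({a} : Set X) (fun _ Bn => Bn ∪ pick '' (N Bn)) n with hB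
  have hB0 : B 0 = {a} := rfl
  have hBsucc : ∀ n, B (n+1) = B n ∪ pick '' (N (B n)) := fun n => rfl
  have hBc : ∀ n, (B n).Countable := by
    intro n
    induction n with
    | zero => exact countable_singleton a
    | succ n ih => rw [hBsucc]; exact ih.union ((hc _ ih).image pick)
  have hBmono : ∀ n, B n ⊆ B (n+1) := fun n => by rw [hBsucc]; exact subset_union_left
  set Bf : Set X := ⋃ n, B n with hBf
  have hBfc : Bf.Countable := countable_iUnion hBc
  obtain ⟨hcont, hidem, hrange, hnet⟩ := hprop Bf hBfc
  have hfixa : r Bf a = a :=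
    fix_of_range hidem (hrange (mem_iUnion.2 ⟨0, by rw [hB0]; exact rfl⟩))
  refine ⟨A ∩ Bf, inter_subset_left, hBfc.mono inter_subset_right, ?_⟩
  rw [mem_closure_iff]
  intro U hU haU
  -- a = r a ∈ closure (r '' A)
  have h1 : a ∈ closure (r Bf '' A) := by
    have := image_closure_subset_closure_image (s := A) hcont
    have h2 : a ∈ r Bf '' closure A := ⟨a, ha, hfixa⟩
    exact this h2
  obtain ⟨y, hyU, x, hxA, hxy⟩ := mem_closure_iff.1 h1 U hU haU
  -- network element containing x
  obtain ⟨M, hMN, hMeq⟩ := hnet U hU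
  have hx : x ∈ (r Bf) ⁻¹' U := by simp [mem_preimage, hxy, hyU]
  rw [hMeq] at hx
  obtain ⟨T, hTM, hxT⟩ := hx
  have hTN : T ∈ N Bf := hMN hTM
  rw [show N Bf = ⋃ n, N (B n) from hu B hBc hBmono] at hTN
  obtain ⟨n, hTn⟩ := mem_iUnion.1 hTN
  have hTA : (T ∩ A).Nonempty := ⟨x, hxT, hxA⟩
  have hpT := hpickA T hTA
  have hpB : pick T ∈ Bf := mem_iUnion.2 ⟨n+1, by rw [hBsucc]; exact Or.inr ⟨T, hTn, rfl⟩⟩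
  have hfix : r Bf (pick T) = pick T := fix_of_range hidem (hrange hpB)
  have hpU : pick T ∈ U := by
    have : pick T ∈ (r Bf) ⁻¹' U := by rw [hMeq]; exact ⟨T, hTM, hpT.1⟩
    rwa [mem_preimage, hfix] at this
  exact ⟨pick T, hpU, hpT.2, hpB⟩


end MRSDual

theorem monotone_retractability_sokolov_duality (X : Type*) [TopologicalSpace X] :
    (MonotonicallySokolov X →
      MonotonicallyRetractable {f : X → ℝ // Continuous f}) ∧
    (MonotonicallyRetractable X →
      MonotonicallySokolov {f : X → ℝ // Continuous f}) ∧
    (MonotonicallyRetractable X → CountableTightness X) := by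
  refine ⟨fun h => ?_, fun h => ?_, fun h => ?_⟩
  · exact MRSDual.part1 h
  · exact MRSDual.part2 h
  · exact MRSDual.part3 h
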